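/- Let p be a prime, m, n positive integers with m dividing n and m < n, and regard F_{p^m} as a subfield of F_{p^n}. Let σ : F_{p^m} → Z/p^mZ be a bijection, c ∈ F_{p^m}, and let G : F_{p^n} → F_{p^n} be PcN with respect to c. Then F : F_{p^n} → F_{p^m} defined by F(x) = Tr_{F_{p^n}/F_{p^m}}(G(x)) satisfies ∑_{x ∈ F_{p^n}} ζ_{p^m}^{σ(F(x+u) − c·F(x))} = 0 for every u ∈ F_{p^n}\{0} (the difference computed in F_{p^m}); that is, F is perfect₂ c-nonlinear (equivalently, c-differential bent₂). -/

import Mathlib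

open Finset

noncomputable section

/-- Finite fields `GaloisField p n` are finite; fix a `Fintype` instance. -/
noncomputable instance (p n : ℕ) [Fact p.Prime] : Fintype (GaloisField p n) :=
  Fintype.ofFinite _

/-- `ζ_q = exp(2πi/q)`. -/
noncomputable def zetaC (q : ℕ) : ℂ := Complex.exp (2 * Real.pi * Complex.I / q)

/-- `ζ_p^t` for `t ∈ F_p`, computed via the integer lift of `t`. -/
noncomputable def eChar (p : ℕ) (t : ZMod p) : ℂ := zetaC p ^ t.val

/-- `ζ_q^s` for `s ∈ Z/qZ`, computed via the integer lift of `s`. -/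
noncomputable def eCharM (q : ℕ) (s : ZMod q) : ℂ := zetaC q ^ s.val

/-- The absolute trace `Tr_k : F_{p^k} → F_p`. -/
noncomputable def trAbs (p k : ℕ) [Fact p.Prime] (x : GaloisField p k) : ZMod p :=
  Algebra.trace (ZMod p) (GaloisField p k) x

/-- The second-kind Walsh transform
`W_H(a) = ∑_x ζ_{p^m}^{σ(H(x))}·ζ_p^{−Tr_n(a·x)}`. -/
noncomputable def Walsh2 (p n m : ℕ) [Fact p.Prime] (σ : GaloisField p m → ZMod (p ^ m))
    (H : GaloisField p n → GaloisField p m) (a : GaloisField p n) : ℂ :=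
  ∑ x : GaloisField p n, eCharM (p ^ m) (σ (H x)) * eChar p (-(trAbs p n (a * x)))

/-- The second-kind `c`-crosscorrelation
`cC_{F,G}(u) = ∑_x ζ_{p^m}^{σ(F(x+u)) − σ(c·G(x))}`, the difference of exponents
taken in `Z/p^mZ`. -/
noncomputable def crossCorr2 (p n m : ℕ) [Fact p.Prime] (σ : GaloisField p m → ZMod (p ^ m))
    (F G : GaloisField p n → GaloisField p m) (c : GaloisField p m)
    (u : GaloisField p n) : ℂ :=
  ∑ x : GaloisField p n, eCharM (p ^ m) (σ (F (x + u)) - σ (c * G x))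

/-- The second-kind `c`-autocorrelation `cC_F = cC_{F,F}`. -/
noncomputable def autoCorr2 (p n m : ℕ) [Fact p.Prime] (σ : GaloisField p m → ZMod (p ^ m))
    (F : GaloisField p n → GaloisField p m) (c : GaloisField p m)
    (u : GaloisField p n) : ℂ :=
  crossCorr2 p n m σ F F c u

/-- `F` is perfect₂ `c`-nonlinear: `cC_F(u) = 0` for all `u ≠ 0`. -/
def PerfectCNonlinear2 (p n m : ℕ) [Fact p.Prime] (σ : GaloisField p m → ZMod (p ^ m))
    (F : GaloisField p n → GaloisField p m) (c : GaloisField p m) : Prop :=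
  ∀ u : GaloisField p n, u ≠ 0 → autoCorr2 p n m σ F c u = 0

/-- `F` is strictly perfect₂ `c`-nonlinear: additionally `cC_F(0) = 0`. -/
def StrictlyPerfectCNonlinear2 (p n m : ℕ) [Fact p.Prime] (σ : GaloisField p m → ZMod (p ^ m))
    (F : GaloisField p n → GaloisField p m) (c : GaloisField p m) : Prop :=
  PerfectCNonlinear2 p n m σ F c ∧ autoCorr2 p n m σ F c 0 = 0

/-- `F` is `c`-differential bent₂: `W_F(x)·conj(W_{cF}(x)) = cC_F(0)` for all `x`,
where `cF` is the map `x ↦ c·F(x)`. -/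
def CDifferentialBent2 (p n m : ℕ) [Fact p.Prime] (σ : GaloisField p m → ZMod (p ^ m))
    (F : GaloisField p n → GaloisField p m) (c : GaloisField p m) : Prop :=
  ∀ x : GaloisField p n,
    Walsh2 p n m σ F x * (starRingEnd ℂ) (Walsh2 p n m σ (fun y => c * F y) x) =
      autoCorr2 p n m σ F c 0

/-- `G : F_{p^n} → F_{p^n}` is PcN with respect to `c`: for every `a`
(with `a ≠ 0` required only when `c = 1`), `x ↦ G(x+a) − c·G(x)` is a bijection. -/
def IsPcN (p n : ℕ) [Fact p.Prime] (G : GaloisField p n → GaloisField p n)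
    (c : GaloisField p n) : Prop :=
  ∀ a : GaloisField p n, (c = 1 → a ≠ 0) →
    Function.Bijective fun x => G (x + a) - c * G x

theorem sum_eCharM_eq_zero (q : ℕ) (hq : 1 < q) [NeZero q] :
    ∑ s : ZMod q, eCharM q s = 0 := by
  have h := (Complex.isPrimitiveRoot_exp q (by omega)).geom_sum_eq_zero hq
  rw [← h]
  refine Finset.sum_nbij' (fun s : ZMod q => s.val) (fun i : ℕ => (i : ZMod q)) ?_ ?_ ?_ ?_ ?_
  · intro a _; exact Finset.mem_range.mpr (ZMod.val_lt a)
  · intro b _; exact Finset.mem_univ _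
  · intro a _; exact ZMod.natCast_rightInverse a
  · intro b hb; exact ZMod.val_cast_of_lt (Finset.mem_range.mp hb)
  · intro a _; rfl

theorem statement_18 (p n m : ℕ) [Fact p.Prime] (hm : 0 < m) (hmn : m ∣ n) (hlt : m < n)
    (ι : GaloisField p m →+* GaloisField p n)
    (σ : GaloisField p m → ZMod (p ^ m)) (hσ : Function.Bijective σ)
    (c : GaloisField p m)
    (G : GaloisField p n → GaloisField p n) (hG : IsPcN p n G (ι c))
    (F : GaloisField p n → GaloisField p m)
    (hF : ∀ x, ι (F x) = ∑ i ∈ Finset.range (n / m), G x ^ p ^ (m * i)) :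
    ∀ u : GaloisField p n, u ≠ 0 →
      ∑ x : GaloisField p n, eCharM (p ^ m) (σ (F (x + u) - c * F x)) = 0 := by
  intro u hu
  classical
  have hp : 1 < p := (Fact.out : p.Prime).one_lt
  set k := n / m with hk
  have hn0 : n ≠ 0 := by omega
  have hnmk : n = m * k := (Nat.mul_div_cancel' hmn).symm
  have hk2 : 2 ≤ k := by
    rcases hmn with ⟨d, rfl⟩
    have hd : 2 ≤ d := by nlinarith
    simpa [hk, Nat.mul_div_cancel_left _ hm] using hd
  have hcardm : Fintype.card (GaloisField p m) = p ^ m := by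
    rw [← Nat.card_eq_fintype_card]; exact GaloisField.card p m hm.ne'
  have hcardn : Fintype.card (GaloisField p n) = p ^ n := by
    rw [← Nat.card_eq_fintype_card]; exact GaloisField.card p n hn0
  -- the difference map
  set D : GaloisField p n → GaloisField p n := fun x => G (x + u) - ι c * G x with hDdef
  have hD : Function.Bijective D := hG u (fun _ => hu)
  have hιinj : Function.Injective ι := ι.injective
  -- c is fixed by all relevant Frobenius powers
  have hcfix : ∀ i : ℕ, (ι c) ^ p ^ (m * i) = ι c := by
    intro i
    have hc : c ^ (p ^ m) ^ i = c := by
      rw [← hcardm]; exact FiniteField.pow_card_pow i c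
    rw [pow_mul, ← map_pow, hc]
  -- key identity
  have hkey : ∀ x, ι (F (x + u) - c * F x) = ∑ i ∈ Finset.range k, (D x) ^ p ^ (m * i) := by
    intro x
    rw [map_sub, map_mul, hF, hF, Finset.mul_sum, ← Finset.sum_sub_distrib]
    refine Finset.sum_congr rfl fun i _ => ?_
    rw [hDdef]
    simp only
    rw [sub_pow_char_pow, mul_pow, hcfix i]
  -- the equivalence from bijectivity and the induced trace-like map H
  set e : GaloisField p n ≃ GaloisField p n := Equiv.ofBijective D hD with hedef
  set H : GaloisField p n → GaloisField p m :=
    fun y => F (e.symm y + u) - c * F (e.symm y) with hHdef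
  have hHD : ∀ x, H (D x) = F (x + u) - c * F x := by
    intro x
    have : e.symm (D x) = x := e.symm_apply_apply x
    rw [hHdef]; simp only [this]
  have hιH : ∀ y, ι (H y) = ∑ i ∈ Finset.range k, y ^ p ^ (m * i) := by
    intro y
    have h1 := hkey (e.symm y)
    have h2 : D (e.symm y) = y := e.apply_symm_apply y
    rw [hHdef]; simp only
    rw [h1, h2]
  -- H is additive
  have hHadd : ∀ y z, H (y + z) = H y + H z := by
    intro y z
    apply hιinj
    rw [map_add, hιH, hιH, hιH, ← Finset.sum_add_distrib]
    exact Finset.sum_congr rfl fun i _ => by rw [add_pow_char_pow]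
  set Hhom : GaloisField p n →+ GaloisField p m := AddMonoidHom.mk' H hHadd with hHhom
  -- kernel bound via polynomial roots
  set P : Polynomial (GaloisField p n) :=
    ∑ i ∈ Finset.range k, Polynomial.X ^ p ^ (m * i) with hPdef
  have hPeval : ∀ y, P.eval y = ∑ i ∈ Finset.range k, y ^ p ^ (m * i) := by
    intro y; rw [hPdef]; simp [Polynomial.eval_finset_sum]
  have hmono : StrictMono (fun i : ℕ => p ^ (m * i)) := by
    intro a b hab
    exact Nat.pow_lt_pow_right hp ((Nat.mul_lt_mul_left hm).mpr hab)
  have hPcoeff : P.coeff (p ^ (m * (k - 1))) = 1 := by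
    rw [hPdef, Polynomial.finset_sum_coeff]
    rw [Finset.sum_eq_single (k - 1)]
    · simp [Polynomial.coeff_X_pow]
    · intro i hi hne
      rw [Polynomial.coeff_X_pow, if_neg]
      exact fun h => hne (hmono.injective h).symm
    · intro h; exact absurd (Finset.mem_range.mpr (by omega)) h
  have hPne : P ≠ 0 := fun h => by simp [h] at hPcoeff
  have hPdeg : P.natDegree ≤ p ^ (m * (k - 1)) := by
    rw [hPdef]
    refine Polynomial.natDegree_sum_le_of_forall_le _ _ fun i hi => ?_
    rw [Polynomial.natDegree_X_pow]
    exact Nat.pow_le_pow_right (by omega) (Nat.mul_le_mul_left m (by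
      have := Finset.mem_range.mp hi; omega))
  -- kernel as a finset
  have hkercard : (Finset.univ.filter (fun y => H y = 0)).card ≤ p ^ (n - m) := by
    have hsub : (Finset.univ.filter (fun y => H y = 0)) ⊆ P.roots.toFinset := by
      intro y hy
      rw [Finset.mem_filter] at hy
      rw [Multiset.mem_toFinset, Polynomial.mem_roots hPne, Polynomial.IsRoot, hPeval,
        ← hιH, hy.2, map_zero]
    calc (Finset.univ.filter (fun y => H y = 0)).card
        ≤ P.roots.toFinset.card := Finset.card_le_card hsub
      _ ≤ Multiset.card P.roots := P.roots.toFinset_card_le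
      _ ≤ P.natDegree := P.card_roots'
      _ ≤ p ^ (m * (k - 1)) := hPdeg
      _ = p ^ (n - m) := by
          congr 1
          obtain ⟨j, hj⟩ : ∃ j, k = j + 1 := ⟨k - 1, by omega⟩
          have hnj : n = m * j + m := by rw [hnmk, hj]; ring
          simp only [hj, Nat.add_sub_cancel]
          omega
  -- surjectivity of H
  have hkerfin : Nat.card (Hhom.ker) = (Finset.univ.filter (fun y => H y = 0)).card := by
    rw [Nat.card_eq_fintype_card]
    have : Fintype.card Hhom.ker = Fintype.card {y : GaloisField p n // H y = 0} := by
      apply Fintype.card_congr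
      exact Equiv.subtypeEquivRight (fun y => by
        simp [AddMonoidHom.mem_ker, hHhom, AddMonoidHom.mk'_apply])
    rw [this, Fintype.card_subtype]
  have hfirst : Nat.card (GaloisField p n ⧸ Hhom.ker) * Nat.card Hhom.ker = p ^ n := by
    rw [← AddSubgroup.card_eq_card_quotient_mul_card_addSubgroup, Nat.card_eq_fintype_card, hcardn]
  have hrange_card : Nat.card Hhom.range = Nat.card (GaloisField p n ⧸ Hhom.ker) :=
    (Nat.card_congr (QuotientAddGroup.quotientKerEquivRange Hhom).toEquiv).symm
  have hrange_ge : p ^ m ≤ Nat.card Hhom.range := by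
    by_contra hlt'
    push_neg at hlt'
    have hker_le : Nat.card Hhom.ker ≤ p ^ (n - m) := by rw [hkerfin]; exact hkercard
    have : Nat.card (GaloisField p n ⧸ Hhom.ker) * Nat.card Hhom.ker < p ^ m * p ^ (n - m) := by
      apply Nat.mul_lt_mul_of_lt_of_le (by rw [← hrange_card]; exact hlt') hker_le
      have : 0 < Nat.card Hhom.ker := Nat.card_pos
      omega
    rw [hfirst, ← pow_add] at this
    have hadd' : m + (n - m) = n := by omega
    rw [hadd'] at this
    exact absurd this (lt_irrefl _)
  have hrange_top : Hhom.range = ⊤ := by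
    apply AddSubgroup.eq_top_of_card_eq
    have hle : Nat.card Hhom.range ≤ p ^ m := by
      rw [← hcardm, ← Nat.card_eq_fintype_card]
      exact Nat.card_le_card_of_injective _ Subtype.val_injective
    rw [Nat.card_eq_fintype_card (α := GaloisField p m), hcardm]
    omega
  have hHsurj : Function.Surjective H := by
    intro t
    have : t ∈ Hhom.range := hrange_top ▸ AddSubgroup.mem_top t
    obtain ⟨y, hy⟩ := this
    exact ⟨y, hy⟩
  -- constant fibers
  have hfiber : ∀ t, (Finset.univ.filter (fun y => H y = t)).card =
      (Finset.univ.filter (fun y => H y = 0)).card := by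
    intro t
    obtain ⟨yt, hyt⟩ := hHsurj t
    refine Finset.card_nbij' (fun y => y - yt) (fun y => y + yt) ?_ ?_ ?_ ?_
    · intro a ha
      rw [Finset.mem_coe, Finset.mem_filter] at ha ⊢
      refine ⟨Finset.mem_univ _, ?_⟩
      have h3 : H (a - yt + yt) = H (a - yt) + H yt := hHadd _ _
      rw [sub_add_cancel] at h3
      rw [eq_sub_of_add_eq h3.symm, ha.2, hyt, sub_self]
    · intro b hb
      rw [Finset.mem_coe, Finset.mem_filter] at hb ⊢
      exact ⟨Finset.mem_univ _, by rw [hHadd, hb.2, hyt, zero_add]⟩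
    · intro a _; ring
    · intro b _; ring
  -- final computation
  have step1 : ∑ x : GaloisField p n, eCharM (p ^ m) (σ (F (x + u) - c * F x)) =
      ∑ y : GaloisField p n, eCharM (p ^ m) (σ (H y)) := by
    rw [← Equiv.sum_comp e (fun y => eCharM (p ^ m) (σ (H y)))]
    exact Finset.sum_congr rfl fun x _ => by rw [show e x = D x from rfl, hHD]
  rw [step1]
  rw [Finset.sum_comp (fun t => eCharM (p ^ m) (σ t)) H]
  have himg : Finset.univ.image H = Finset.univ := Finset.image_univ_of_surjective hHsurj
  rw [himg]
  have : ∀ t ∈ (Finset.univ : Finset (GaloisField p m)),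
      #{a | H a = t} • eCharM (p ^ m) (σ t) =
      (Finset.univ.filter (fun y => H y = 0)).card • eCharM (p ^ m) (σ t) := by
    intro t _
    congr 1
    exact hfiber t
  rw [Finset.sum_congr rfl this, ← Finset.smul_sum]
  have hzero : ∑ t : GaloisField p m, eCharM (p ^ m) (σ t) = 0 := by
    haveI : NeZero (p ^ m) := ⟨by positivity⟩
    rw [← sum_eCharM_eq_zero (p ^ m) (Nat.one_lt_pow hm.ne' hp)]
    exact Fintype.sum_bijective σ hσ _ _ (fun t => rfl)
  rw [hzero, smul_zero]
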